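/- Under the FDSM iteration x_{n+1} = Tx_n − α_n g_n with T firmly nonexpansive, f convex, g_n ∈ ∂f(Tx_{n−τ_n}), delays bounded by τ, subgradients bounded by C, nonincreasing step sizes with (3 + 2(τ+1)²)α₀^a < 8 for some a ∈ (0,1), and x* a minimizer of f over Fix T, the best achieved function values satisfy: min_{0 ≤ n ≤ N} f(x_{n+1}) − f* ≤ (‖x₀ − x*‖² + 2C² Σ_{n=0}^N α_n² + 40C² Σ_{n=0}^N α_n^{2−a}) / (2 Σ_{n=0}^N α_n) for all N ∈ ℕ. -/

import Mathlib

local notation "⟪" x ", " y "⟫" => @inner ℝ _ _ x y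

lemma fdsm_exists_subgradient {d : ℕ} (f : EuclideanSpace ℝ (Fin d) → ℝ)
    (hf : ConvexOn ℝ Set.univ f) (x₀ : EuclideanSpace ℝ (Fin d)) :
    ∃ v : EuclideanSpace ℝ (Fin d), ∀ y, ⟪v, y - x₀⟫ ≤ f y - f x₀ := by
  have hcont : Continuous f := by
    rw [← continuousOn_univ]; exact hf.continuousOn isOpen_univ
  set U : Set (EuclideanSpace ℝ (Fin d) × ℝ) := {p | p.1 ∈ Set.univ ∧ f p.1 < p.2} with hU
  have hUconv : Convex ℝ U := hf.convex_strict_epigraph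
  have hUopen : IsOpen U := by
    have h0 : U = {p : EuclideanSpace ℝ (Fin d) × ℝ | f p.1 < p.2} := by ext p; simp [hU]
    rw [h0]
    exact isOpen_lt (hcont.comp continuous_fst) continuous_snd
  have hx₀ : ((x₀, f x₀) : EuclideanSpace ℝ (Fin d) × ℝ) ∉ U := by simp [hU]
  obtain ⟨φ, hφ⟩ := geometric_hahn_banach_open_point hUconv hUopen hx₀
  set c : ℝ := φ (0, 1) with hcdef
  have hφsplit : ∀ (y : EuclideanSpace ℝ (Fin d)) (t : ℝ), φ (y, t) = φ (y, 0) + t * c := by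
    intro y t
    have h1 : ((y, t) : EuclideanSpace ℝ (Fin d) × ℝ) = (y, (0:ℝ)) + t • ((0:EuclideanSpace ℝ (Fin d)), (1:ℝ)) := by
      simp [Prod.ext_iff]
    rw [h1, map_add, map_smul, smul_eq_mul]
  have hc : c < 0 := by
    have h2 := hφ (x₀, f x₀ + 1) (by simp [hU])
    rw [hφsplit x₀ (f x₀ + 1), hφsplit x₀ (f x₀)] at h2
    linarith
  have key : ∀ y, φ (y, 0) + f y * c ≤ φ (x₀, 0) + f x₀ * c := by
    intro y
    refine le_of_forall_pos_le_add fun δ hδ => ?_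
    have hcpos : 0 < -c := by linarith
    have hdc : 0 < δ / (-c) := div_pos hδ hcpos
    have h3 := hφ (y, f y + δ / (-c)) (by simp [hU]; linarith)
    rw [hφsplit y (f y + δ / (-c)), hφsplit x₀ (f x₀)] at h3
    have h4 : δ / (-c) * c = -δ := by
      have h7 := div_mul_cancel₀ δ (ne_of_gt hcpos)
      nlinarith [h7]
    nlinarith [h3, h4]
  refine ⟨(InnerProductSpace.toDual ℝ (EuclideanSpace ℝ (Fin d))).symm
    ((-c)⁻¹ • (φ.comp (ContinuousLinearMap.inl ℝ (EuclideanSpace ℝ (Fin d)) ℝ))), fun y => ?_⟩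
  rw [InnerProductSpace.toDual_symm_apply]
  have h5 := key y
  have hcpos : 0 < -c := by linarith
  have h6 : ((-c)⁻¹ • (φ.comp (ContinuousLinearMap.inl ℝ (EuclideanSpace ℝ (Fin d)) ℝ))) (y - x₀)
      = (-c)⁻¹ * (φ (y, 0) - φ (x₀, 0)) := by
    simp [ContinuousLinearMap.smul_apply, ContinuousLinearMap.comp_apply, map_sub, mul_sub]
  rw [h6, inv_mul_le_iff₀ hcpos]
  nlinarith

lemma fdsm_telescope {E : Type*} [NormedAddCommGroup E] (u : ℕ → E) (m n : ℕ) (h : m ≤ n) :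
    ‖u n - u m‖ ≤ ∑ k ∈ Finset.Ico m n, ‖u (k + 1) - u k‖ := by
  induction n, h using Nat.le_induction with
  | base => simp
  | succ n hmn ih =>
    rw [Finset.sum_Ico_succ_top hmn]
    have h1 : ‖u (n+1) - u m‖ ≤ ‖u (n+1) - u n‖ + ‖u n - u m‖ :=
      norm_sub_le_norm_sub_add_norm_sub _ _ _
    linarith

lemma fdsm_count (τ M : ℕ) (w : ℕ → ℝ) (hw : ∀ k, 0 ≤ w k) :
    ∑ n ∈ Finset.range M, ∑ k ∈ Finset.Ico (n - τ) n, w k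
      ≤ (τ : ℝ) * ∑ k ∈ Finset.range M, w k := by
  have h1 : ∀ n ∈ Finset.range M, ∑ k ∈ Finset.Ico (n - τ) n, w k
      = ∑ k ∈ Finset.range M, if k ∈ Finset.Ico (n - τ) n then w k else 0 := by
    intro n hn
    rw [Finset.sum_ite_mem, Finset.inter_eq_right.2]
    intro k hk
    simp only [Finset.mem_Ico] at hk
    simp only [Finset.mem_range] at hn ⊢
    omega
  rw [Finset.sum_congr rfl h1, Finset.sum_comm, Finset.mul_sum]
  refine Finset.sum_le_sum fun k _ => ?_
  rw [← Finset.sum_filter]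
  have hcard : (Finset.filter (fun n => k ∈ Finset.Ico (n - τ) n) (Finset.range M)).card ≤ τ := by
    have hsub : Finset.filter (fun n => k ∈ Finset.Ico (n - τ) n) (Finset.range M)
        ⊆ Finset.Ioc k (k + τ) := by
      intro n hn
      simp only [Finset.mem_filter, Finset.mem_Ico] at hn
      simp only [Finset.mem_Ioc]
      omega
    calc _ ≤ (Finset.Ioc k (k + τ)).card := Finset.card_le_card hsub
    _ = τ := by rw [Nat.card_Ioc]; omega
  rw [Finset.sum_const, nsmul_eq_mul]
  calc ((Finset.filter (fun n => k ∈ Finset.Ico (n - τ) n) (Finset.range M)).card : ℝ) * w k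
      ≤ (τ : ℝ) * w k := by
        apply mul_le_mul_of_nonneg_right _ (hw k)
        exact_mod_cast hcard

lemma fdsm_young (Cc A αn sk : ℝ) (hA : 0 < A) :
    4 * Cc * αn * sk ≤ A * sk ^ 2 + 4 * Cc ^ 2 * αn ^ 2 / A := by
  rw [← sub_nonneg]
  have h : A * sk ^ 2 + 4 * Cc ^ 2 * αn ^ 2 / A - 4 * Cc * αn * sk
      = (A * sk - 2 * Cc * αn) ^ 2 / A := by
    field_simp
    ring
  rw [h]
  positivity

lemma fdsm_rpow_split (t a : ℝ) (ht : 0 < t) : t ^ a * t ^ (2 - a) = t ^ 2 := by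
  rw [← Real.rpow_add ht, show a + (2 - a) = (2:ℝ) by ring,
    show (2:ℝ) = ((2:ℕ):ℝ) by norm_num, Real.rpow_natCast]

set_option maxHeartbeats 1000000 in
theorem fdsm_rate_best_function_values (d : ℕ)
    (T : EuclideanSpace ℝ (Fin d) → EuclideanSpace ℝ (Fin d))
    (hT : ∀ x y, ⟪T x - T y, x - y⟫ ≥ ‖T x - T y‖ ^ 2)
    (f : EuclideanSpace ℝ (Fin d) → ℝ) (hf : ConvexOn ℝ Set.univ f)
    (a : ℝ) (ha : a ∈ Set.Ioo (0 : ℝ) 1)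
    (τ : ℕ) (τn : ℕ → ℕ) (hτ : ∀ n, τn n ≤ τ)
    (x : ℤ → EuclideanSpace ℝ (Fin d))
    (hinit : ∀ k : ℤ, -(τ : ℤ) ≤ k → k ≤ 0 → x k = x 0)
    (α : ℕ → ℝ) (hαpos : ∀ n, 0 < α n) (hαmono : ∀ n, α (n + 1) ≤ α n)
    (hα0 : (3 + 2 * ((τ : ℝ) + 1) ^ 2) * α 0 ^ a < 8)
    (g : ℕ → EuclideanSpace ℝ (Fin d))
    (hg : ∀ (n : ℕ) (y : EuclideanSpace ℝ (Fin d)),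
      ⟪g n, y - T (x ((n : ℤ) - τn n))⟫ ≤ f y - f (T (x ((n : ℤ) - τn n))))
    (hiter : ∀ n : ℕ, x ((n : ℤ) + 1) = T (x (n : ℤ)) - α n • g n)
    (C : ℝ) (hC : 0 < C)
    (hsgbdd : ∀ (n : ℕ) (v : EuclideanSpace ℝ (Fin d)),
      ((∀ y, ⟪v, y - x (n : ℤ)⟫ ≤ f y - f (x (n : ℤ))) ∨
        (∀ y, ⟪v, y - T (x (n : ℤ))⟫ ≤ f y - f (T (x (n : ℤ))))) → ‖v‖ ≤ C)
    (xstar : EuclideanSpace ℝ (Fin d)) (hxstarfix : T xstar = xstar)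
    (hxstaropt : ∀ y, T y = y → f xstar ≤ f y) :
    ∀ N : ℕ,
      Finset.inf' (Finset.range (N + 1)) (by simp) (fun n => f (x ((n : ℤ) + 1))) - f xstar ≤
        (‖x 0 - xstar‖ ^ 2 + 2 * C ^ 2 * ∑ n ∈ Finset.range (N + 1), α n ^ 2
            + 40 * C ^ 2 * ∑ n ∈ Finset.range (N + 1), α n ^ (2 - a)) /
          (2 * ∑ n ∈ Finset.range (N + 1), α n) := by
  intro N
  obtain ⟨ha0, ha1⟩ := ha
  -- basic abbreviations
  set D : ℕ → ℝ := fun n => ‖x (n : ℤ) - xstar‖ ^ 2 with hD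
  set se : ℕ → ℝ := fun n => ‖T (x (n : ℤ)) - x (n : ℤ)‖ with hse
  set Δ : ℕ → ℝ := fun n => ‖T (x (n : ℤ)) - T (x ((n : ℤ) - τn n))‖ with hΔdef
  -- cast helpers
  have hnat : ∀ n : ℕ, x (((n + 1 : ℕ)) : ℤ) = x ((n : ℤ) + 1) := by
    intro n; norm_num
  -- antitone step sizes
  have hαanti : Antitone α := antitone_nat_of_succ_le hαmono
  have hα0le : ∀ n, α n ≤ α 0 := fun n => hαanti (Nat.zero_le n)
  have hrpos : ∀ n, (0:ℝ) < α n ^ a := fun n => Real.rpow_pos_of_pos (hαpos n) a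
  have hr2pos : ∀ n, (0:ℝ) < α n ^ (2 - a) := fun n => Real.rpow_pos_of_pos (hαpos n) _
  have hrmono : ∀ n, α n ^ a ≤ α 0 ^ a := fun n =>
    Real.rpow_le_rpow (hαpos n).le (hα0le n) ha0.le
  -- delayed point identification
  have hτa : ∀ n : ℕ, x ((n : ℤ) - τn n) = x (((n - τn n : ℕ)) : ℤ) := by
    intro n
    by_cases h : τn n ≤ n
    · congr 1; push_cast [h]; ring
    · push_neg at h
      have h1 : x ((n : ℤ) - τn n) = x 0 := by
        apply hinit
        · have := hτ n; omega
        · omega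
      have h2 : (n - τn n : ℕ) = 0 := by omega
      rw [h1, h2]; norm_num
  -- subgradient norm bounds
  have hgb : ∀ n, ‖g n‖ ≤ C := by
    intro n
    refine hsgbdd (n - τn n) (g n) (Or.inr fun y => ?_)
    have := hg n y
    rwa [hτa n] at this
  -- nonexpansiveness of T
  have hTne : ∀ p q, ‖T p - T q‖ ≤ ‖p - q‖ := by
    intro p q
    by_contra h
    push_neg at h
    have h1 := hT p q
    have h2 := real_inner_le_norm (T p - T q) (p - q)
    have h3 : (0:ℝ) ≤ ‖p - q‖ := norm_nonneg _
    nlinarith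
  -- firm nonexpansiveness with xstar
  have hfne : ∀ n : ℕ, ‖T (x (n : ℤ)) - xstar‖ ^ 2 ≤ D n - se n ^ 2 := by
    intro n
    have h1 := hT (x (n : ℤ)) xstar
    rw [hxstarfix] at h1
    have h3 : (T (x (n : ℤ)) - xstar) - (x (n : ℤ) - xstar) = T (x (n : ℤ)) - x (n : ℤ) := by
      abel
    have h2 := norm_sub_sq_real (T (x (n : ℤ)) - xstar) (x (n : ℤ) - xstar)
    rw [h3] at h2
    simp only [hD, hse]
    linarith
  -- subgradients at iterates
  choose v hv using fun n : ℕ => fdsm_exists_subgradient f hf (x ((n : ℤ) + 1))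
  have hvb : ∀ n : ℕ, ‖v n‖ ≤ C := by
    intro n
    refine hsgbdd (n + 1) (v n) (Or.inl fun y => ?_)
    rw [hnat n]
    exact hv n y
  -- main per-step inequality
  have hmain : ∀ n : ℕ, 2 * α n * (f (x ((n : ℤ) + 1)) - f xstar) ≤
      D n - D (n + 1) - se n ^ 2 + 4 * α n * C * Δ n + 3 * α n ^ 2 * C ^ 2 := by
    intro n
    have hα := (hαpos n).le
    have hΔnn : (0:ℝ) ≤ Δ n := norm_nonneg _
    -- expansion of the distance to xstar
    have e1 : x ((n : ℤ) + 1) - xstar = (T (x (n : ℤ)) - xstar) - α n • g n := by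
      rw [hiter n]; abel
    have e2 : D (n + 1) = ‖T (x (n : ℤ)) - xstar‖ ^ 2
        - 2 * α n * ⟪g n, T (x (n : ℤ)) - xstar⟫ + α n ^ 2 * ‖g n‖ ^ 2 := by
      have : D (n + 1) = ‖x ((n : ℤ) + 1) - xstar‖ ^ 2 := by
        simp only [hD]; rw [hnat n]
      rw [this, e1, norm_sub_sq_real, real_inner_smul_right,
        real_inner_comm, norm_smul, Real.norm_eq_abs, mul_pow, sq_abs]
      ring
    -- inner product splitting
    have e3 : ⟪g n, T (x (n : ℤ)) - xstar⟫
        = ⟪g n, T (x ((n : ℤ) - τn n)) - xstar⟫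
          + ⟪g n, T (x (n : ℤ)) - T (x ((n : ℤ) - τn n))⟫ := by
      rw [← inner_add_right]
      congr 1
      abel
    have e4 : f (T (x ((n : ℤ) - τn n))) - f xstar
        ≤ ⟪g n, T (x ((n : ℤ) - τn n)) - xstar⟫ := by
      have h1 := hg n xstar
      have h2 : ⟪g n, T (x ((n : ℤ) - τn n)) - xstar⟫
          = - ⟪g n, xstar - T (x ((n : ℤ) - τn n))⟫ := by
        rw [← inner_neg_right]
        congr 1
        abel
      rw [h2]
      linarith
    have e5 : -(C * Δ n) ≤ ⟪g n, T (x (n : ℤ)) - T (x ((n : ℤ) - τn n))⟫ := by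
      have h1 := abs_real_inner_le_norm (g n) (T (x (n : ℤ)) - T (x ((n : ℤ) - τn n)))
      have h2 := neg_abs_le ⟪g n, T (x (n : ℤ)) - T (x ((n : ℤ) - τn n))⟫
      have h3 : ‖g n‖ * Δ n ≤ C * Δ n := mul_le_mul_of_nonneg_right (hgb n) hΔnn
      simp only [hΔdef] at h3 ⊢
      linarith
    -- function value at the new iterate
    have e6 : f (x ((n : ℤ) + 1)) ≤ f (T (x ((n : ℤ) - τn n))) + C * (α n * C + Δ n) := by
      have h1 := hv n (T (x ((n : ℤ) - τn n)))
      have h2 : T (x ((n : ℤ) - τn n)) - x ((n : ℤ) + 1)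
          = (T (x ((n : ℤ) - τn n)) - T (x (n : ℤ))) + α n • g n := by
        rw [hiter n]; abel
      have h3 : ‖T (x ((n : ℤ) - τn n)) - x ((n : ℤ) + 1)‖ ≤ Δ n + α n * C := by
        rw [h2]
        refine le_trans (norm_add_le _ _) ?_
        have h4 : ‖T (x ((n : ℤ) - τn n)) - T (x (n : ℤ))‖ = Δ n := by
          simp only [hΔdef]; rw [norm_sub_rev]
        have h5 : ‖α n • g n‖ ≤ α n * C := by
          rw [norm_smul, Real.norm_eq_abs, abs_of_nonneg hα]
          exact mul_le_mul_of_nonneg_left (hgb n) hα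
        linarith
      have h6 := abs_real_inner_le_norm (v n) (T (x ((n : ℤ) - τn n)) - x ((n : ℤ) + 1))
      have h7 := neg_abs_le ⟪v n, T (x ((n : ℤ) - τn n)) - x ((n : ℤ) + 1)⟫
      have h8 : ‖v n‖ * ‖T (x ((n : ℤ) - τn n)) - x ((n : ℤ) + 1)‖ ≤ C * (Δ n + α n * C) := by
        have := norm_nonneg (T (x ((n : ℤ) - τn n)) - x ((n : ℤ) + 1))
        have := norm_nonneg (v n)
        nlinarith [hvb n, hC.le]
      nlinarith [h1]
    -- assemble
    have e7 : 2 * α n * (f (T (x ((n : ℤ) - τn n))) - f xstar - C * Δ n)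
        ≤ 2 * α n * ⟪g n, T (x (n : ℤ)) - xstar⟫ := by
      have h1 : f (T (x ((n : ℤ) - τn n))) - f xstar - C * Δ n
          ≤ ⟪g n, T (x (n : ℤ)) - xstar⟫ := by
        rw [e3]; linarith
      apply mul_le_mul_of_nonneg_left h1 (by linarith [hαpos n])
    have e8 : α n ^ 2 * ‖g n‖ ^ 2 ≤ α n ^ 2 * C ^ 2 := by
      have h1 : ‖g n‖ ^ 2 ≤ C ^ 2 := by nlinarith [norm_nonneg (g n), hgb n]
      apply mul_le_mul_of_nonneg_left h1 (by positivity)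
    have e9 : D (n + 1) ≤ D n - se n ^ 2
        - 2 * α n * (f (T (x ((n : ℤ) - τn n))) - f xstar) + 2 * α n * (C * Δ n)
        + α n ^ 2 * C ^ 2 := by
      have := hfne n
      linarith [e2, e7, e8]
    have e10 := mul_le_mul_of_nonneg_left e6 (by linarith [hαpos n] : (0:ℝ) ≤ 2 * α n)
    linarith [e9, e10]
  -- Δ bound
  have hΔb : ∀ n : ℕ, Δ n ≤ ∑ k ∈ Finset.Ico (n - τ) n, (se k + α k * C) := by
    intro n
    have hm : n - τn n ≤ n := Nat.sub_le _ _
    have h1 : Δ n ≤ ‖x (n : ℤ) - x (((n - τn n : ℕ)) : ℤ)‖ := by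
      simp only [hΔdef]
      rw [hτa n]
      exact hTne _ _
    have h2 := fdsm_telescope (fun k : ℕ => x (k : ℤ)) (n - τn n) n hm
    have h3 : ∀ k ∈ Finset.Ico (n - τn n) n,
        ‖x (((k + 1 : ℕ)) : ℤ) - x ((k : ℕ) : ℤ)‖ ≤ se k + α k * C := by
      intro k hk
      rw [hnat k, hiter k]
      have h4 : T (x (k : ℤ)) - α k • g k - x (k : ℤ)
          = (T (x (k : ℤ)) - x (k : ℤ)) - α k • g k := by abel
      rw [h4]
      refine le_trans (norm_sub_le _ _) ?_
      have h5 : ‖α k • g k‖ ≤ α k * C := by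
        rw [norm_smul, Real.norm_eq_abs, abs_of_nonneg (hαpos k).le]
        exact mul_le_mul_of_nonneg_left (hgb k) (hαpos k).le
      simp only [hse]
      linarith
    have h4 : ∑ k ∈ Finset.Ico (n - τn n) n, (se k + α k * C)
        ≤ ∑ k ∈ Finset.Ico (n - τ) n, (se k + α k * C) := by
      apply Finset.sum_le_sum_of_subset_of_nonneg
      · apply Finset.Ico_subset_Ico_left
        have := hτ n; omega
      · intro k _ _
        have h6 : (0:ℝ) ≤ se k := norm_nonneg _
        have h7 := mul_pos (hαpos k) hC
        linarith
    calc Δ n ≤ ‖x (n : ℤ) - x (((n - τn n : ℕ)) : ℤ)‖ := h1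
      _ ≤ ∑ k ∈ Finset.Ico (n - τn n) n, ‖x (((k + 1 : ℕ)) : ℤ) - x ((k : ℕ) : ℤ)‖ := h2
      _ ≤ ∑ k ∈ Finset.Ico (n - τn n) n, (se k + α k * C) := Finset.sum_le_sum h3
      _ ≤ _ := h4
  -- the per-step inequality after Young
  set c : ℝ := (3 + 2 * ((τ : ℝ) + 1) ^ 2) / (8 * ((τ : ℝ) + 1)) with hcdef
  have hcpos : 0 < c := by positivity
  have hstep : ∀ n : ℕ, 2 * α n * (f (x ((n : ℤ) + 1)) - f xstar) ≤
      (D n - D (n + 1)) - se n ^ 2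
      + (∑ k ∈ Finset.Ico (n - τ) n, c * α 0 ^ a * se k ^ 2)
      + (τ : ℝ) * (4 * C ^ 2 / c) * α n ^ (2 - a)
      + (∑ k ∈ Finset.Ico (n - τ) n, 4 * C ^ 2 * α 0 ^ a * α k ^ (2 - a))
      + 2 * C ^ 2 * α n ^ 2 + (8 / 5) * C ^ 2 * α n ^ (2 - a) := by
    intro n
    have h4αC : (0:ℝ) ≤ 4 * α n * C := by nlinarith [hαpos n, hC]
    have key1 : 4 * α n * C * Δ n ≤
        (∑ k ∈ Finset.Ico (n - τ) n, c * α 0 ^ a * se k ^ 2)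
        + (τ : ℝ) * (4 * C ^ 2 / c) * α n ^ (2 - a)
        + (∑ k ∈ Finset.Ico (n - τ) n, 4 * C ^ 2 * α 0 ^ a * α k ^ (2 - a)) := by
      have h1 : 4 * α n * C * Δ n ≤ 4 * α n * C * ∑ k ∈ Finset.Ico (n - τ) n, (se k + α k * C) :=
        mul_le_mul_of_nonneg_left (hΔb n) h4αC
      have h2 : 4 * α n * C * ∑ k ∈ Finset.Ico (n - τ) n, (se k + α k * C)
          = ∑ k ∈ Finset.Ico (n - τ) n, (4 * C * α n * se k + 4 * C ^ 2 * (α n * α k)) := by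
        rw [Finset.mul_sum]
        exact Finset.sum_congr rfl fun k _ => by ring
      have h3 : ∀ k ∈ Finset.Ico (n - τ) n,
          4 * C * α n * se k + 4 * C ^ 2 * (α n * α k)
            ≤ c * α 0 ^ a * se k ^ 2 + 4 * C ^ 2 / c * α n ^ (2 - a)
              + 4 * C ^ 2 * α 0 ^ a * α k ^ (2 - a) := by
        intro k hk
        have hkn : k < n := (Finset.mem_Ico.mp hk).2
        have hA : 0 < c * α n ^ a := mul_pos hcpos (hrpos n)
        have hy := fdsm_young C (c * α n ^ a) (α n) (se k) hA
        have hid : 4 * C ^ 2 * α n ^ 2 / (c * α n ^ a) = 4 * C ^ 2 / c * α n ^ (2 - a) := by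
          rw [← fdsm_rpow_split (α n) a (hαpos n)]
          have := (hrpos n).ne'
          have := hcpos.ne'
          field_simp
        rw [hid] at hy
        have hy2 : 4 * C * α n * se k ≤ c * α 0 ^ a * se k ^ 2
            + 4 * C ^ 2 / c * α n ^ (2 - a) := by
          have h5 : c * α n ^ a * se k ^ 2 ≤ c * α 0 ^ a * se k ^ 2 :=
            mul_le_mul_of_nonneg_right
              (mul_le_mul_of_nonneg_left (hrmono n) hcpos.le) (sq_nonneg _)
          linarith
        have hk2 : α n ≤ α k := hαanti hkn.le
        have hsplit : α k ^ a * α k ^ (2 - a) = α k ^ 2 := fdsm_rpow_split (α k) a (hαpos k)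
        have t1 : α n * α k ≤ α k ^ 2 := by nlinarith [hαpos k]
        have t2 : α k ^ 2 ≤ α 0 ^ a * α k ^ (2 - a) := by
          have := mul_le_mul_of_nonneg_right (hrmono k) (hr2pos k).le
          linarith
        have hy3 : 4 * C ^ 2 * (α n * α k) ≤ 4 * C ^ 2 * (α 0 ^ a * α k ^ (2 - a)) :=
          mul_le_mul_of_nonneg_left (t1.trans t2) (by positivity)
        linarith
      have hcard : ((Finset.Ico (n - τ) n).card : ℝ) ≤ (τ : ℝ) := by
        rw [Nat.card_Ico]
        exact_mod_cast Nat.le_of_lt_succ (by omega)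
      calc 4 * α n * C * Δ n
          ≤ 4 * α n * C * ∑ k ∈ Finset.Ico (n - τ) n, (se k + α k * C) := h1
        _ = ∑ k ∈ Finset.Ico (n - τ) n, (4 * C * α n * se k + 4 * C ^ 2 * (α n * α k)) := h2
        _ ≤ ∑ k ∈ Finset.Ico (n - τ) n, (c * α 0 ^ a * se k ^ 2
              + 4 * C ^ 2 / c * α n ^ (2 - a) + 4 * C ^ 2 * α 0 ^ a * α k ^ (2 - a)) :=
            Finset.sum_le_sum h3
        _ = (∑ k ∈ Finset.Ico (n - τ) n, c * α 0 ^ a * se k ^ 2)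
              + ((Finset.Ico (n - τ) n).card : ℝ) * (4 * C ^ 2 / c * α n ^ (2 - a))
              + (∑ k ∈ Finset.Ico (n - τ) n, 4 * C ^ 2 * α 0 ^ a * α k ^ (2 - a)) := by
            rw [Finset.sum_add_distrib, Finset.sum_add_distrib, Finset.sum_const, nsmul_eq_mul]
        _ ≤ _ := by
            have hterm : (0:ℝ) ≤ 4 * C ^ 2 / c * α n ^ (2 - a) :=
              (mul_pos (div_pos (by positivity) hcpos) (hr2pos n)).le
            have := mul_le_mul_of_nonneg_right hcard hterm
            have heq : (τ : ℝ) * (4 * C ^ 2 / c * α n ^ (2 - a))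
                = (τ : ℝ) * (4 * C ^ 2 / c) * α n ^ (2 - a) := by ring
            linarith [heq ▸ this]
    have key2 : 3 * α n ^ 2 * C ^ 2 ≤ 2 * C ^ 2 * α n ^ 2 + (8 / 5) * C ^ 2 * α n ^ (2 - a) := by
      have h1 : α n ^ a * α n ^ (2 - a) = α n ^ 2 := fdsm_rpow_split _ _ (hαpos n)
      have h3 : α 0 ^ a ≤ 8 / 5 := by
        nlinarith [hα0, hrpos 0, Nat.cast_nonneg (α := ℝ) τ,
          mul_nonneg (Nat.cast_nonneg (α := ℝ) τ) (hrpos 0).le,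
          mul_nonneg (mul_nonneg (Nat.cast_nonneg (α := ℝ) τ) (Nat.cast_nonneg (α := ℝ) τ)) (hrpos 0).le]
      have h4 : α n ^ 2 ≤ (8 / 5) * α n ^ (2 - a) := by
        have h5 := mul_le_mul_of_nonneg_right (hrmono n) (hr2pos n).le
        have h6 := mul_le_mul_of_nonneg_right h3 (hr2pos n).le
        linarith
      nlinarith [h4, sq_nonneg C]
    linarith [hmain n, key1, key2]
  -- summed inequality
  have hsum : ∑ n ∈ Finset.range (N + 1), 2 * α n * (f (x ((n : ℤ) + 1)) - f xstar) ≤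
      ‖x 0 - xstar‖ ^ 2 + 2 * C ^ 2 * ∑ n ∈ Finset.range (N + 1), α n ^ 2
        + 40 * C ^ 2 * ∑ n ∈ Finset.range (N + 1), α n ^ (2 - a) := by
    set M := N + 1 with hM
    have hstart : ∑ n ∈ Finset.range M, 2 * α n * (f (x ((n : ℤ) + 1)) - f xstar)
        ≤ ∑ n ∈ Finset.range M, ((D n - D (n + 1)) - se n ^ 2
          + (∑ k ∈ Finset.Ico (n - τ) n, c * α 0 ^ a * se k ^ 2)
          + (τ : ℝ) * (4 * C ^ 2 / c) * α n ^ (2 - a)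
          + (∑ k ∈ Finset.Ico (n - τ) n, 4 * C ^ 2 * α 0 ^ a * α k ^ (2 - a))
          + 2 * C ^ 2 * α n ^ 2 + (8 / 5) * C ^ 2 * α n ^ (2 - a)) :=
      Finset.sum_le_sum fun n _ => hstep n
    have hsplitsum : ∑ n ∈ Finset.range M, ((D n - D (n + 1)) - se n ^ 2
          + (∑ k ∈ Finset.Ico (n - τ) n, c * α 0 ^ a * se k ^ 2)
          + (τ : ℝ) * (4 * C ^ 2 / c) * α n ^ (2 - a)
          + (∑ k ∈ Finset.Ico (n - τ) n, 4 * C ^ 2 * α 0 ^ a * α k ^ (2 - a))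
          + 2 * C ^ 2 * α n ^ 2 + (8 / 5) * C ^ 2 * α n ^ (2 - a))
        = (∑ n ∈ Finset.range M, (D n - D (n + 1)))
          - (∑ n ∈ Finset.range M, se n ^ 2)
          + (∑ n ∈ Finset.range M, ∑ k ∈ Finset.Ico (n - τ) n, c * α 0 ^ a * se k ^ 2)
          + (∑ n ∈ Finset.range M, (τ : ℝ) * (4 * C ^ 2 / c) * α n ^ (2 - a))
          + (∑ n ∈ Finset.range M, ∑ k ∈ Finset.Ico (n - τ) n,
              4 * C ^ 2 * α 0 ^ a * α k ^ (2 - a))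
          + (∑ n ∈ Finset.range M, 2 * C ^ 2 * α n ^ 2)
          + (∑ n ∈ Finset.range M, (8 / 5) * C ^ 2 * α n ^ (2 - a)) := by
      simp only [Finset.sum_add_distrib, Finset.sum_sub_distrib]
    -- telescoping
    have htel : ∑ n ∈ Finset.range M, (D n - D (n + 1)) = D 0 - D M :=
      Finset.sum_range_sub' D M
    have hD0 : D 0 = ‖x 0 - xstar‖ ^ 2 := by simp only [hD, Nat.cast_zero]
    have hDM : 0 ≤ D M := by simp only [hD]; positivity
    -- nonnegativity of sums
    have hsenn : 0 ≤ ∑ k ∈ Finset.range M, se k ^ 2 :=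
      Finset.sum_nonneg fun k _ => sq_nonneg _
    have hrnn : 0 ≤ ∑ k ∈ Finset.range M, α k ^ (2 - a) :=
      Finset.sum_nonneg fun k _ => (hr2pos k).le
    -- absorb the se² double sum
    have hcount1 := fdsm_count τ M (fun k => se k ^ 2) (fun k => sq_nonneg _)
    have hca : c * α 0 ^ a * ((τ : ℝ) + 1) = (3 + 2 * ((τ : ℝ) + 1) ^ 2) * α 0 ^ a / 8 := by
      rw [hcdef]
      field_simp
    have habs : c * α 0 ^ a * (τ : ℝ) ≤ 1 := by
      have h1 : c * α 0 ^ a * ((τ : ℝ) + 1) < 1 := by rw [hca]; linarith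
      have h2 : 0 < c * α 0 ^ a := mul_pos hcpos (hrpos 0)
      nlinarith
    have hB : ∑ n ∈ Finset.range M, ∑ k ∈ Finset.Ico (n - τ) n, c * α 0 ^ a * se k ^ 2
        ≤ ∑ k ∈ Finset.range M, se k ^ 2 := by
      have e1 : ∑ n ∈ Finset.range M, ∑ k ∈ Finset.Ico (n - τ) n, c * α 0 ^ a * se k ^ 2
          = c * α 0 ^ a * ∑ n ∈ Finset.range M, ∑ k ∈ Finset.Ico (n - τ) n, se k ^ 2 := by
        rw [Finset.mul_sum]
        exact Finset.sum_congr rfl fun n _ => (Finset.mul_sum _ _ _).symm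
      rw [e1]
      have h2 : 0 < c * α 0 ^ a := mul_pos hcpos (hrpos 0)
      calc c * α 0 ^ a * ∑ n ∈ Finset.range M, ∑ k ∈ Finset.Ico (n - τ) n, se k ^ 2
          ≤ c * α 0 ^ a * ((τ : ℝ) * ∑ k ∈ Finset.range M, se k ^ 2) :=
            mul_le_mul_of_nonneg_left hcount1 h2.le
        _ = (c * α 0 ^ a * (τ : ℝ)) * ∑ k ∈ Finset.range M, se k ^ 2 := by ring
        _ ≤ 1 * ∑ k ∈ Finset.range M, se k ^ 2 :=
            mul_le_mul_of_nonneg_right habs hsenn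
        _ = _ := one_mul _
    -- coefficient bound for the (4C²/c) term
    have hC1 : ∑ n ∈ Finset.range M, (τ : ℝ) * (4 * C ^ 2 / c) * α n ^ (2 - a)
        ≤ 16 * C ^ 2 * ∑ n ∈ Finset.range M, α n ^ (2 - a) := by
      rw [← Finset.mul_sum]
      have hq : (τ : ℝ) * 4 / c ≤ 16 := by
        rw [div_le_iff₀ hcpos]
        have h16 : (16:ℝ) * c = (16 * (3 + 2 * ((τ:ℝ) + 1) ^ 2)) / (8 * ((τ:ℝ) + 1)) := by
          rw [hcdef]; ring
        rw [h16, le_div_iff₀ (by positivity : (0:ℝ) < 8 * ((τ : ℝ) + 1))]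
        nlinarith [Nat.cast_nonneg (α := ℝ) τ, sq_nonneg ((τ : ℝ))]
      have h1 : (τ : ℝ) * (4 * C ^ 2 / c) = ((τ : ℝ) * 4 / c) * C ^ 2 := by ring
      rw [h1]
      have h2 := mul_le_mul_of_nonneg_right
        (mul_le_mul_of_nonneg_right hq (sq_nonneg C)) hrnn
      linarith
    -- the stale-step double sum
    have hcount2 := fdsm_count τ M (fun k => α k ^ (2 - a)) (fun k => (hr2pos k).le)
    have hC2 : ∑ n ∈ Finset.range M, ∑ k ∈ Finset.Ico (n - τ) n,
          4 * C ^ 2 * α 0 ^ a * α k ^ (2 - a)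
        ≤ 8 * C ^ 2 * ∑ k ∈ Finset.range M, α k ^ (2 - a) := by
      have e1 : ∑ n ∈ Finset.range M, ∑ k ∈ Finset.Ico (n - τ) n,
            4 * C ^ 2 * α 0 ^ a * α k ^ (2 - a)
          = 4 * C ^ 2 * α 0 ^ a * ∑ n ∈ Finset.range M, ∑ k ∈ Finset.Ico (n - τ) n,
              α k ^ (2 - a) := by
        rw [Finset.mul_sum]
        exact Finset.sum_congr rfl fun n _ => (Finset.mul_sum _ _ _).symm
      rw [e1]
      have hcoef : 4 * (τ : ℝ) * α 0 ^ a ≤ 8 := by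
        have h1 : 4 * (τ : ℝ) ≤ 3 + 2 * ((τ : ℝ) + 1) ^ 2 := by
          nlinarith [sq_nonneg ((τ : ℝ))]
        have h2 := mul_le_mul_of_nonneg_right h1 (hrpos 0).le
        nlinarith [hα0]
      calc 4 * C ^ 2 * α 0 ^ a * ∑ n ∈ Finset.range M, ∑ k ∈ Finset.Ico (n - τ) n,
            α k ^ (2 - a)
          ≤ 4 * C ^ 2 * α 0 ^ a * ((τ : ℝ) * ∑ k ∈ Finset.range M, α k ^ (2 - a)) := by
            exact mul_le_mul_of_nonneg_left hcount2
              (mul_pos (by positivity : (0:ℝ) < 4 * C ^ 2) (hrpos 0)).le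
        _ = (4 * (τ : ℝ) * α 0 ^ a) * C ^ 2 * ∑ k ∈ Finset.range M, α k ^ (2 - a) := by ring
        _ ≤ 8 * C ^ 2 * ∑ k ∈ Finset.range M, α k ^ (2 - a) := by
            have h3 := mul_le_mul_of_nonneg_right
              (mul_le_mul_of_nonneg_right hcoef (sq_nonneg C)) hrnn
            linarith
    have hC3 : ∑ n ∈ Finset.range M, 2 * C ^ 2 * α n ^ 2
        = 2 * C ^ 2 * ∑ n ∈ Finset.range M, α n ^ 2 := by
      rw [Finset.mul_sum]
    have hC4 : ∑ n ∈ Finset.range M, (8 / 5) * C ^ 2 * α n ^ (2 - a)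
        = (8 / 5) * C ^ 2 * ∑ n ∈ Finset.range M, α n ^ (2 - a) := by
      rw [Finset.mul_sum]
    have hfinal : (16 : ℝ) * C ^ 2 * ∑ n ∈ Finset.range M, α n ^ (2 - a)
        + 8 * C ^ 2 * ∑ n ∈ Finset.range M, α n ^ (2 - a)
        + (8 / 5) * C ^ 2 * ∑ n ∈ Finset.range M, α n ^ (2 - a)
        ≤ 40 * C ^ 2 * ∑ n ∈ Finset.range M, α n ^ (2 - a) := by
      nlinarith [mul_nonneg (sq_nonneg C) hrnn]
    rw [hsplitsum, htel] at hstart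
    rw [hM]
    linarith [hstart, hB, hC1, hC2]
  -- conclusion
  have hS : 0 < ∑ n ∈ Finset.range (N + 1), α n :=
    Finset.sum_pos (fun n _ => hαpos n) ⟨0, by simp⟩
  rw [le_div_iff₀ (mul_pos two_pos hS)]
  have key : ∀ r : ℝ, (∀ n ∈ Finset.range (N + 1), r ≤ f (x ((n : ℤ) + 1))) →
      (r - f xstar) * (2 * ∑ n ∈ Finset.range (N + 1), α n) ≤
        ‖x 0 - xstar‖ ^ 2 + 2 * C ^ 2 * ∑ n ∈ Finset.range (N + 1), α n ^ 2
          + 40 * C ^ 2 * ∑ n ∈ Finset.range (N + 1), α n ^ (2 - a) := by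
    intro r hr
    calc (r - f xstar) * (2 * ∑ n ∈ Finset.range (N + 1), α n)
        = ∑ n ∈ Finset.range (N + 1), α n * (2 * (r - f xstar)) := by
          rw [← Finset.sum_mul]; ring
      _ ≤ ∑ n ∈ Finset.range (N + 1), 2 * α n * (f (x ((n : ℤ) + 1)) - f xstar) := by
          refine Finset.sum_le_sum fun n hn => ?_
          have h1 := mul_le_mul_of_nonneg_left (hr n hn) (by linarith [hαpos n] : (0:ℝ) ≤ 2 * α n)
          linarith
      _ ≤ _ := hsum
  exact key _ fun n hn => Finset.inf'_le _ hn
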